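/- Let α₁ ≤ α₂ ≤ ... ≤ α_{x+1} be positive integers and B > 0 such that B ≥ B/(α₁+1) + α₁·B/(α₂+1) + ... + α_x·B/(α_{x+1}+1). Then 2 ≥ 1/α₁ + α₁/α₂ + ... + α_{x−1}/α_x, and consequently α_x ≥ (x/2)^x. -/

import Mathlib

open Finset

/-- Group-size inequality in the proof of Theorem 2: for positive integers
`α₁ ≤ ⋯ ≤ α_{x+1}` with
`B ≥ B/(α₁+1) + ∑_{r=1}^{x} α_r·B/(α_{r+1}+1)`, one has
`2 ≥ 1/α₁ + ∑_{r=1}^{x−1} α_r/α_{r+1}`, and consequently `α_x ≥ (x/2)^x`. -/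
theorem group_sizes_grow (x : ℕ) (hx : 1 ≤ x)
    (α : ℕ → ℕ) (hpos : ∀ r, 1 ≤ α r)
    (hmono : ∀ r ∈ Finset.Icc 1 x, α r ≤ α (r + 1))
    (B : ℝ) (hB : 0 < B)
    (h : B / ((α 1 : ℝ) + 1) + ∑ r ∈ Finset.Icc 1 x, (α r : ℝ) * B / ((α (r + 1) : ℝ) + 1) ≤ B) :
    1 / (α 1 : ℝ) + ∑ r ∈ Finset.Icc 1 (x - 1), (α r : ℝ) / (α (r + 1) : ℝ) ≤ 2 ∧
    ((x : ℝ) / 2) ^ x ≤ (α x : ℝ) := by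
  have hαpos : ∀ r, (0 : ℝ) < (α r : ℝ) := fun r => by exact_mod_cast hpos r
  have hα1 : ∀ r, (1 : ℝ) ≤ (α r : ℝ) := fun r => by exact_mod_cast hpos r
  -- Key inequality: `1/α₁ + ∑_{r=1}^{x} α_r/α_{r+1} ≤ 2`.
  have key : 1 / (α 1 : ℝ) + ∑ r ∈ Icc 1 x, (α r : ℝ) / (α (r + 1) : ℝ) ≤ 2 := by
    have h2 : B / 2 * (1 / (α 1 : ℝ) + ∑ r ∈ Icc 1 x, (α r : ℝ) / (α (r + 1) : ℝ)) ≤ B := by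
      calc B / 2 * (1 / (α 1 : ℝ) + ∑ r ∈ Icc 1 x, (α r : ℝ) / (α (r + 1) : ℝ))
          = B / (2 * (α 1 : ℝ)) +
            ∑ r ∈ Icc 1 x, (α r : ℝ) * B / (2 * (α (r + 1) : ℝ)) := by
            rw [mul_add, Finset.mul_sum]
            congr 1
            · rw [div_mul_div_comm]; ring_nf
            · refine Finset.sum_congr rfl fun r _ => ?_
              rw [div_mul_div_comm]; ring_nf
        _ ≤ B / ((α 1 : ℝ) + 1) +
            ∑ r ∈ Icc 1 x, (α r : ℝ) * B / ((α (r + 1) : ℝ) + 1) := by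
            gcongr with r hr <;>
              first
                | positivity
                | exact hB.le
                | exact mul_nonneg (hαpos _).le hB.le
                | linarith [hα1 1]
                | linarith [hα1 (r + 1)]
        _ ≤ B := h
    have hB2 : (0 : ℝ) < B / 2 := by linarith
    have := (mul_le_mul_iff_right₀ hB2).mp (by linarith : B / 2 * (1 / (α 1 : ℝ) +
      ∑ r ∈ Icc 1 x, (α r : ℝ) / (α (r + 1) : ℝ)) ≤ B / 2 * 2)
    linarith
  have hsub : ∑ r ∈ Icc 1 (x - 1), (α r : ℝ) / (α (r + 1) : ℝ) ≤
      ∑ r ∈ Icc 1 x, (α r : ℝ) / (α (r + 1) : ℝ) := by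
    apply Finset.sum_le_sum_of_subset_of_nonneg
    · exact Finset.Icc_subset_Icc_right (by omega)
    · intro r _ _; positivity
  have part1 : 1 / (α 1 : ℝ) + ∑ r ∈ Icc 1 (x - 1), (α r : ℝ) / (α (r + 1) : ℝ) ≤ 2 := by
    linarith
  refine ⟨part1, ?_⟩
  -- Part 2: AM-GM
  set A : ℕ → ℝ := fun r => if r = 0 then 1 else (α r : ℝ) with hA
  have hApos : ∀ r, 0 < A r := by
    intro r
    by_cases hr : r = 0 <;> simp [hA, hr, hαpos r]
  -- the x terms whose sum is bounded by 2 and whose product telescopes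
  have hS : ∑ r ∈ Icc 1 x, A (r - 1) / A r =
      1 / (α 1 : ℝ) + ∑ r ∈ Icc 1 (x - 1), (α r : ℝ) / (α (r + 1) : ℝ) := by
    obtain ⟨n, rfl⟩ : ∃ n, x = n + 1 := ⟨x - 1, by omega⟩
    rw [← Finset.Ico_add_one_right_eq_Icc, Finset.sum_Ico_eq_sum_range,
      ← Finset.Ico_add_one_right_eq_Icc, Finset.sum_Ico_eq_sum_range]
    simp only [Nat.add_sub_cancel, Nat.succ_sub_one]
    rw [Finset.sum_range_succ']
    simp only [hA]
    rw [add_comm]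
    congr 1
    · refine Finset.sum_congr rfl fun i _ => ?_
      norm_num
      rw [add_comm 1 i, add_comm 1 (i + 1)]
  have hP : ∀ m, ∏ r ∈ Icc 1 m, A (r - 1) / A r = A 0 / A m := by
    intro m
    induction m with
    | zero =>
      simp
      rw [div_self (hApos 0).ne']
    | succ k ih =>
      rw [Finset.prod_Icc_succ_top (by omega), ih]
      simp only [Nat.add_sub_cancel]
      field_simp
      rw [mul_comm (A 0) (A k)]
      exact mul_div_mul_left _ _ (hApos k).ne'
  have hw : ∑ _r ∈ Icc 1 x, ((x : ℝ)⁻¹) = 1 := by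
    rw [Finset.sum_const, Nat.card_Icc]
    simp only [Nat.add_sub_cancel, nsmul_eq_mul]
    field_simp
  have amgm := Real.geom_mean_le_arith_mean_weighted (Icc 1 x)
    (fun _ => (x : ℝ)⁻¹) (fun r => A (r - 1) / A r)
    (fun i _ => by positivity) hw (fun i _ => (div_pos (hApos _) (hApos _)).le)
  rw [Real.finset_prod_rpow _ _ (fun i _ => (div_pos (hApos _) (hApos _)).le)] at amgm
  rw [hP, ← Finset.mul_sum, hS] at amgm
  have hA0 : A 0 = 1 := by simp [hA]
  have hAx : A x = (α x : ℝ) := by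
    simp only [hA]
    rw [if_neg (by omega)]
  have hxpos : (0 : ℝ) < x := by exact_mod_cast hx
  have h3 : (1 / (α x : ℝ)) ^ ((x : ℝ)⁻¹) ≤ (x : ℝ)⁻¹ * 2 := by
    rw [hA0, hAx] at amgm
    calc (1 / (α x : ℝ)) ^ ((x : ℝ)⁻¹)
        ≤ ((x : ℝ)⁻¹ * (1 / (α 1 : ℝ) + ∑ r ∈ Icc 1 (x - 1), (α r : ℝ) / (α (r + 1) : ℝ))) := amgm
      _ ≤ (x : ℝ)⁻¹ * 2 := by
          apply mul_le_mul_of_nonneg_left part1 (by positivity)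
  -- raise to the x-th power
  have h4 : (1 / (α x : ℝ)) ≤ ((x : ℝ)⁻¹ * 2) ^ (x : ℕ) := by
    have := Real.rpow_le_rpow (by positivity) h3 (le_of_lt hxpos)
    rwa [← Real.rpow_mul (by positivity),
      inv_mul_cancel₀ (ne_of_gt hxpos), Real.rpow_one, Real.rpow_natCast] at this
  have h5 : ((x : ℝ)⁻¹ * 2) ^ (x : ℕ) = (((x : ℝ) / 2) ^ x)⁻¹ := by
    rw [← inv_pow]
    congr 1
    field_simp
  rw [h5, ← one_div] at h4
  exact le_of_one_div_le_one_div (hαpos x) h4
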